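/- Let a, b ∈ ℝ and define E(x) = (sign(x) + 1)/2 (so E(x) = 1 for x > 0, E(x) = 0 for x < 0). Then for every ξ ∈ (−1, 1): ∫₀^{2π} ( −a E(ξ + sin τ) + b E(−ξ − sin τ) ) dτ = (b − a)π − 2(a + b) arcsin ξ. -/

import Mathlib

open Real

/-- the averaged function of the dry-friction system.  With
`E(x) = (sign x + 1)/2`, for every `ξ ∈ (−1,1)`:
`∫₀^{2π} (−a E(ξ + sin τ) + b E(−ξ − sin τ)) dτ = (b − a)π − 2(a + b) arcsin ξ`. -/
theorem averaged_dry_friction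
    (a b : ℝ) (E : ℝ → ℝ) (hE : ∀ x, E x = (Real.sign x + 1) / 2)
    (ξ : ℝ) (hξ : ξ ∈ Set.Ioo (-1 : ℝ) 1) :
    ∫ τ in (0 : ℝ)..(2 * π), (-a * E (ξ + Real.sin τ) + b * E (-ξ - Real.sin τ))
      = (b - a) * π - 2 * (a + b) * Real.arcsin ξ := by
  obtain ⟨h1, h2⟩ := hξ
  set c := Real.arcsin ξ with hc
  have hpi : (0:ℝ) < π := Real.pi_pos
  have hc1 : -(π/2) < c := Real.neg_pi_div_two_lt_arcsin.mpr h1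
  have hc2 : c < π/2 := Real.arcsin_lt_pi_div_two.mpr h2
  have hsin : Real.sin c = ξ := Real.sin_arcsin h1.le h2.le
  set f : ℝ → ℝ := fun τ => -a * E (ξ + Real.sin τ) + b * E (-ξ - Real.sin τ) with hf
  -- pointwise values on the open subintervals
  have hA : ∀ τ ∈ Set.Ioo (-c) (π + c), f τ = -a := by
    intro τ hτ
    obtain ⟨ht1, ht2⟩ := hτ
    have hpos : 0 < ξ + Real.sin τ := by
      have : Real.sin (-c) < Real.sin τ := by
        rcases le_or_gt τ (π/2) with h | h
        · exact Real.strictMonoOn_sin ⟨by linarith, by linarith⟩ ⟨by linarith, h⟩ ht1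
        · have hm1 : -c ∈ Set.Icc (-(π/2)) (π/2) := ⟨by linarith, by linarith⟩
          have hm2 : π - τ ∈ Set.Icc (-(π/2)) (π/2) := ⟨by linarith, by linarith⟩
          have := Real.strictMonoOn_sin hm1 hm2 (by linarith)
          rwa [Real.sin_pi_sub] at this
      rw [Real.sin_neg, hsin] at this
      linarith
    have hneg : -ξ - Real.sin τ < 0 := by linarith
    simp [hf, hE, Real.sign_of_pos hpos, Real.sign_of_neg hneg]
  have hB : ∀ τ ∈ Set.Ioo (π + c) (2*π - c), f τ = b := by
    intro τ hτ
    obtain ⟨ht1, ht2⟩ := hτ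
    have hneg : ξ + Real.sin τ < 0 := by
      have : Real.sin τ < Real.sin (-c) := by
        rcases le_or_gt τ (3*π/2) with h | h
        · have hm1 : π - τ ∈ Set.Icc (-(π/2)) (π/2) := ⟨by linarith, by linarith⟩
          have hm2 : -c ∈ Set.Icc (-(π/2)) (π/2) := ⟨by linarith, by linarith⟩
          have := Real.strictMonoOn_sin hm1 hm2 (by linarith)
          rwa [Real.sin_pi_sub] at this
        · have hm1 : τ - 2*π ∈ Set.Icc (-(π/2)) (π/2) := ⟨by linarith, by linarith⟩
          have hm2 : -c ∈ Set.Icc (-(π/2)) (π/2) := ⟨by linarith, by linarith⟩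
          have := Real.strictMonoOn_sin hm1 hm2 (by linarith)
          rwa [Real.sin_sub_two_pi] at this
      rw [Real.sin_neg, hsin] at this
      linarith
    have hpos : 0 < -ξ - Real.sin τ := by linarith
    simp [hf, hE, Real.sign_of_pos hpos, Real.sign_of_neg hneg]
  have hle1 : -c ≤ π + c := by linarith
  have hle2 : π + c ≤ 2*π - c := by linarith
  -- a.e. equalities on the interval-integrals' domains
  have hae1 : ∀ᵐ x : ℝ, x ∈ Set.uIoc (-c) (π + c) → f x = -a := by
    have hne : ∀ᵐ x : ℝ, x ∉ ({π + c} : Set ℝ) :=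
      MeasureTheory.compl_mem_ae_iff.mpr (MeasureTheory.measure_singleton _)
    filter_upwards [hne] with x hx hxI
    rw [Set.uIoc_of_le hle1] at hxI
    exact hA x ⟨hxI.1, lt_of_le_of_ne hxI.2 (by simpa using hx)⟩
  have hae2 : ∀ᵐ x : ℝ, x ∈ Set.uIoc (π + c) (2*π - c) → f x = b := by
    have hne : ∀ᵐ x : ℝ, x ∉ ({2*π - c} : Set ℝ) :=
      MeasureTheory.compl_mem_ae_iff.mpr (MeasureTheory.measure_singleton _)
    filter_upwards [hne] with x hx hxI
    rw [Set.uIoc_of_le hle2] at hxI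
    exact hB x ⟨hxI.1, lt_of_le_of_ne hxI.2 (by simpa using hx)⟩
  -- integrability
  have hint1 : IntervalIntegrable f MeasureTheory.volume (-c) (π + c) := by
    apply (intervalIntegrable_const (c := -a)).congr_ae
    refine (MeasureTheory.ae_restrict_iff' measurableSet_uIoc).mpr ?_
    filter_upwards [hae1] with x hx hxI
    exact (hx hxI).symm
  have hint2 : IntervalIntegrable f MeasureTheory.volume (π + c) (2*π - c) := by
    apply (intervalIntegrable_const (c := b)).congr_ae
    refine (MeasureTheory.ae_restrict_iff' measurableSet_uIoc).mpr ?_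
    filter_upwards [hae2] with x hx hxI
    exact (hx hxI).symm
  -- compute the two pieces
  have hI1 : ∫ x in (-c)..(π + c), f x = -a * (π + 2*c) := by
    rw [intervalIntegral.integral_congr_ae hae1, intervalIntegral.integral_const]
    simp; ring
  have hI2 : ∫ x in (π + c)..(2*π - c), f x = b * (π - 2*c) := by
    rw [intervalIntegral.integral_congr_ae hae2, intervalIntegral.integral_const]
    simp; ring
  -- periodicity: shift the integration interval
  have hper : Function.Periodic f (2*π) := by
    intro x
    simp [hf, Real.sin_add_two_pi]
  have hshift : ∫ x in (0:ℝ)..(2*π), f x = ∫ x in (-c)..(2*π - c), f x := by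
    have := hper.intervalIntegral_add_eq 0 (-c)
    rw [zero_add] at this
    rw [this]
    norm_num [sub_eq_neg_add, add_comm]
  have hsplit : ∫ x in (-c)..(2*π - c), f x
      = (∫ x in (-c)..(π + c), f x) + ∫ x in (π + c)..(2*π - c), f x :=
    (intervalIntegral.integral_add_adjacent_intervals hint1 hint2).symm
  calc ∫ τ in (0:ℝ)..(2*π), f τ
      = (∫ x in (-c)..(π + c), f x) + ∫ x in (π + c)..(2*π - c), f x := by
        rw [hshift, hsplit]
    _ = (b - a) * π - 2 * (a + b) * c := by rw [hI1, hI2]; ring
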